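/- Zeroth-order Sommerfeld limit: if h : ℝ → ℝ is continuous, bounded, and integrable on (-∞, μ], then ∫_{-∞}^{∞} h(ε)·f_FD((ε-μ)/T) dε → ∫_{-∞}^{μ} h(ε) dε as T → 0⁺. -/

import Mathlib

open MeasureTheory Filter

noncomputable def fFD (x : ℝ) : ℝ := (Real.exp x + 1)⁻¹

lemma fFD_nonneg (x : ℝ) : 0 ≤ fFD x := by
  unfold fFD; positivity

lemma fFD_le_one (x : ℝ) : fFD x ≤ 1 := by
  unfold fFD
  rw [inv_le_one_iff₀]
  right
  nlinarith [Real.exp_pos x]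

lemma fFD_le_exp_neg (x : ℝ) : fFD x ≤ Real.exp (-x) := by
  unfold fFD
  rw [Real.exp_neg]
  exact inv_anti₀ (Real.exp_pos x) (by linarith)

lemma fFD_continuous : Continuous fFD := by
  unfold fFD
  exact (Real.continuous_exp.add continuous_const).inv₀
    (fun x => (add_pos (Real.exp_pos x) one_pos).ne')

theorem sommerfeld_zeroth_order
    (h : ℝ → ℝ) (μ : ℝ)
    (hcont : Continuous h)
    (hb : ∃ C : ℝ, ∀ x, |h x| ≤ C)
    (hint : IntegrableOn h (Set.Iic μ)) :
    Tendsto (fun T : ℝ => ∫ ε : ℝ, h ε * fFD ((ε - μ) / T))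
      (nhdsWithin 0 (Set.Ioi 0)) (nhds (∫ ε in Set.Iic μ, h ε)) := by
  obtain ⟨C, hC⟩ := hb
  have hC0 : 0 ≤ C := le_trans (abs_nonneg _) (hC 0)
  set bound : ℝ → ℝ := fun ε => if ε ≤ μ then |h ε| else C * Real.exp (μ - ε)
    with hbound_def
  have hrw : (∫ ε in Set.Iic μ, h ε) = ∫ ε, Set.indicator (Set.Iic μ) h ε :=
    (integral_indicator measurableSet_Iic).symm
  rw [hrw]
  apply tendsto_integral_filter_of_dominated_convergence bound
  · filter_upwards [self_mem_nhdsWithin] with T _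
    exact (hcont.mul (fFD_continuous.comp
      ((continuous_id.sub continuous_const).div_const T))).aestronglyMeasurable
  · have hmem : Set.Ioc (0:ℝ) 1 ∈ nhdsWithin 0 (Set.Ioi 0) :=
      Ioc_mem_nhdsGT_of_mem (by simp)
    filter_upwards [hmem] with T hT
    filter_upwards with ε
    have hT0 : 0 < T := hT.1
    have hT1 : T ≤ 1 := hT.2
    rw [Real.norm_eq_abs, abs_mul, abs_of_nonneg (fFD_nonneg _)]
    by_cases hε : ε ≤ μ
    · rw [hbound_def]; simp only [if_pos hε]
      calc |h ε| * fFD ((ε - μ) / T) ≤ |h ε| * 1 :=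
            mul_le_mul_of_nonneg_left (fFD_le_one _) (abs_nonneg _)
        _ = |h ε| := mul_one _
    · rw [hbound_def]; simp only [if_neg hε]
      push_neg at hε
      have h1 : fFD ((ε - μ) / T) ≤ Real.exp (-((ε - μ) / T)) := fFD_le_exp_neg _
      have h2 : ε - μ ≤ (ε - μ) / T := by
        rw [le_div_iff₀ hT0]; nlinarith
      have h3 : Real.exp (-((ε - μ) / T)) ≤ Real.exp (μ - ε) := by
        apply Real.exp_le_exp.2; linarith
      calc |h ε| * fFD ((ε - μ) / T) ≤ C * Real.exp (μ - ε) :=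
        mul_le_mul (hC ε) (h1.trans h3) (fFD_nonneg _) hC0
        _ = C * Real.exp (μ - ε) := rfl
  · -- bound integrable
    rw [← integrableOn_univ, ← Set.Iic_union_Ioi (a := μ)]
    apply MeasureTheory.IntegrableOn.union
    · have habs : IntegrableOn (fun x => |h x|) (Set.Iic μ) := hint.abs
      apply habs.congr_fun _ measurableSet_Iic
      intro x hx
      rw [hbound_def]; simp only [if_pos (Set.mem_Iic.1 hx)]
    · have : IntegrableOn (fun x : ℝ => C * Real.exp μ * Real.exp (-1 * x))
          (Set.Ioi μ) := (exp_neg_integrableOn_Ioi μ one_pos).const_mul _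
      apply this.congr_fun _ measurableSet_Ioi
      intro x hx
      rw [hbound_def]
      simp only [if_neg (not_le.2 (Set.mem_Ioi.1 hx))]
      rw [mul_assoc, ← Real.exp_add]
      ring_nf
  · -- pointwise a.e. convergence
    have hae : ∀ᵐ ε : ℝ, ε ≠ μ := by
      rw [ae_iff]
      have : {a : ℝ | ¬a ≠ μ} = {μ} := by ext x; simp
      rw [this]
      exact Real.volume_singleton
    filter_upwards [hae] with ε hε
    rcases lt_or_gt_of_ne hε with hlt | hgt
    · have harg : Tendsto (fun T : ℝ => (ε - μ) / T) (nhdsWithin 0 (Set.Ioi 0)) atBot := by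
        simp only [div_eq_mul_inv]
        exact (tendsto_const_mul_atBot_of_neg (by linarith)).2 tendsto_inv_nhdsGT_zero
      have hexp : Tendsto (fun T : ℝ => Real.exp ((ε - μ) / T))
          (nhdsWithin 0 (Set.Ioi 0)) (nhds 0) :=
        Real.tendsto_exp_atBot.comp harg
      have hfd : Tendsto (fun T : ℝ => fFD ((ε - μ) / T))
          (nhdsWithin 0 (Set.Ioi 0)) (nhds 1) := by
        have := ((hexp.add tendsto_const_nhds).inv₀ (by norm_num)
          : Tendsto (fun T : ℝ => (Real.exp ((ε - μ) / T) + 1)⁻¹) _ (nhds ((0 + 1)⁻¹)))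
        simpa [fFD] using this
      have : Set.indicator (Set.Iic μ) h ε = h ε := by
        rw [Set.indicator_of_mem (Set.mem_Iic.2 hlt.le)]
      rw [this]
      simpa using tendsto_const_nhds.mul hfd
    · have harg : Tendsto (fun T : ℝ => (ε - μ) / T) (nhdsWithin 0 (Set.Ioi 0)) atTop := by
        simp only [div_eq_mul_inv]
        exact (tendsto_const_mul_atTop_of_pos (by linarith)).2 tendsto_inv_nhdsGT_zero
      have hexp : Tendsto (fun T : ℝ => Real.exp ((ε - μ) / T) + 1)
          (nhdsWithin 0 (Set.Ioi 0)) atTop :=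
        (Real.tendsto_exp_atTop.comp harg).atTop_add tendsto_const_nhds
      have hfd : Tendsto (fun T : ℝ => fFD ((ε - μ) / T))
          (nhdsWithin 0 (Set.Ioi 0)) (nhds 0) := hexp.inv_tendsto_atTop
      have : Set.indicator (Set.Iic μ) h ε = 0 := by
        rw [Set.indicator_of_notMem (by simpa using hgt)]
      rw [this]
      simpa using tendsto_const_nhds.mul hfd
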